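/- Let X be a Banach sequence space such that X embeds continuously into ℓ∞, X_a is non-trivial, and X_a ≠ X. Then the quotient space X / X_a is not isomorphic to a dual Banach space. -/

import Mathlib

open Filter Topology MeasureTheory Set

/-- A **Banach ideal space** on a measure space `(α, μ)`: a collection of (real-valued)
measurable functions with a complete lattice-compatible norm satisfying the ideal property. -/
structure BanachIdealSpace (α : Type*) [MeasurableSpace α] (μ : Measure α) where
  Mem : (α → ℝ) → Prop
  N : (α → ℝ) → ℝ
  mem_zero : Mem 0
  mem_add : ∀ f g, Mem f → Mem g → Mem (f + g)
  mem_smul : ∀ (c : ℝ) f, Mem f → Mem (c • f)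
  measurable : ∀ f, Mem f → AEMeasurable f μ
  N_nonneg : ∀ f, 0 ≤ N f
  N_zero : N 0 = 0
  N_eq_zero : ∀ f, Mem f → N f = 0 → (∀ᵐ x ∂μ, f x = 0)
  N_add : ∀ f g, Mem f → Mem g → N (f + g) ≤ N f + N g
  N_smul : ∀ (c : ℝ) f, N (c • f) = |c| * N f
  ideal : ∀ f g, AEMeasurable f μ → (∀ᵐ x ∂μ, |f x| ≤ |g x|) → Mem g →
    Mem f ∧ N f ≤ N g
  complete : ∀ u : ℕ → (α → ℝ), (∀ n, Mem (u n)) →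
    (∀ ε : ℝ, 0 < ε → ∃ n₀ : ℕ, ∀ m n, n₀ ≤ m → n₀ ≤ n → N (u m - u n) < ε) →
    ∃ f, Mem f ∧ Tendsto (fun n => N (u n - f)) atTop (𝓝 0)

namespace BanachIdealSpace

variable {α : Type*} [MeasurableSpace α] {μ : Measure α}

/-- Distance (w.r.t. a norm functional `N`) from `f` to a set `S` of functions. -/
noncomputable def distIn (N : (α → ℝ) → ℝ) (f : α → ℝ) (S : Set (α → ℝ)) : ℝ :=
  sInf ((fun g => N (f - g)) '' S)

/-- The set of **order continuous elements** of a (generalized) function space given by a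
membership predicate `Mem` and a norm `N`: those `f` such that every sequence `uₙ` with
`0 ≤ uₙ ≤ |f|` a.e., a.e. non-increasing and converging to `0` a.e., satisfies `N (uₙ) → 0`. -/
def ocSet (μ : Measure α) (Mem : (α → ℝ) → Prop) (N : (α → ℝ) → ℝ) : Set (α → ℝ) :=
  {f | Mem f ∧ ∀ u : ℕ → (α → ℝ), (∀ n, Mem (u n)) →
    (∀ n, ∀ᵐ x ∂μ, 0 ≤ u n x ∧ u n x ≤ |f x|) →
    (∀ n, ∀ᵐ x ∂μ, u (n + 1) x ≤ u n x) →
    (∀ᵐ x ∂μ, Tendsto (fun n => u n x) atTop (𝓝 0)) →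
    Tendsto (fun n => N (u n)) atTop (𝓝 0)}

/-- The ideal `X_a` of order continuous elements of a Banach ideal space `X`. -/
def oc (X : BanachIdealSpace α μ) : Set (α → ℝ) := ocSet μ X.Mem X.N

/-- An **order ideal** of a Banach ideal space: a closed solid linear subspace. -/
structure IsOrderIdeal (X : BanachIdealSpace α μ) (J : Set (α → ℝ)) : Prop where
  subset : ∀ f ∈ J, X.Mem f
  zero : (0 : α → ℝ) ∈ J
  add : ∀ f g, f ∈ J → g ∈ J → f + g ∈ J
  smul : ∀ (c : ℝ) f, f ∈ J → c • f ∈ J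
  solid : ∀ f g, f ∈ J → X.Mem g → (∀ᵐ x ∂μ, |g x| ≤ |f x|) → g ∈ J
  closed : ∀ (u : ℕ → (α → ℝ)) f, (∀ n, u n ∈ J) → X.Mem f →
    Tendsto (fun n => X.N (f - u n)) atTop (𝓝 0) → f ∈ J

/-- The **Fatou property** of a Banach ideal space. -/
def Fatou (X : BanachIdealSpace α μ) : Prop :=
  ∀ (u : ℕ → (α → ℝ)) (f : α → ℝ), (∀ n, X.Mem (u n)) → AEMeasurable f μ →
    (∀ᵐ x ∂μ, 0 ≤ u 0 x) → (∀ᵐ x ∂μ, Monotone fun n => u n x) →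
    (∀ᵐ x ∂μ, Tendsto (fun n => u n x) atTop (𝓝 (f x))) →
    BddAbove (Set.range fun n => X.N (u n)) →
    X.Mem f ∧ Tendsto (fun n => X.N (u n)) atTop (𝓝 (X.N f))

/-- The **semi-Fatou property**: if `0 ≤ uₙ ↑ f ∈ X` then `‖uₙ‖ ↑ ‖f‖`. -/
def SemiFatou (X : BanachIdealSpace α μ) : Prop :=
  ∀ (u : ℕ → (α → ℝ)) (f : α → ℝ), (∀ n, X.Mem (u n)) → X.Mem f →
    (∀ᵐ x ∂μ, 0 ≤ u 0 x) → (∀ᵐ x ∂μ, Monotone fun n => u n x) →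
    (∀ᵐ x ∂μ, Tendsto (fun n => u n x) atTop (𝓝 (f x))) →
    Tendsto (fun n => X.N (u n)) atTop (𝓝 (X.N f))

/-- A Banach ideal space is **rearrangement invariant (symmetric)**: equimeasurable
functions belong to the space simultaneously and have equal norms. -/
def Symmetric (X : BanachIdealSpace α μ) : Prop :=
  ∀ f g, AEMeasurable f μ →
    (∀ lam : ℝ, 0 < lam → μ {x | lam < |f x|} = μ {x | lam < |g x|}) →
    X.Mem g → X.Mem f ∧ X.N f = X.N g

/-- The **non-increasing rearrangement** of a function `f` (w.r.t. the measure `μ`). -/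
noncomputable def rear (μ : Measure α) (f : α → ℝ) (t : ℝ) : ℝ :=
  sInf {lam : ℝ | 0 < lam ∧ μ {x | lam < |f x|} ≤ ENNReal.ofReal t}

/-- A (generalized) function space given by `(Mem, N)` contains a **lattice isometric copy
of `ℓ∞`**: there is a linear map from bounded sequences which preserves absolute values
(hence the lattice operations) and is an isometry for the sup norm on bounded sequences. -/
def HasLatticeCopyLinf (Mem : (α → ℝ) → Prop) (N : (α → ℝ) → ℝ) : Prop :=
  ∃ T : (ℕ → ℝ) → (α → ℝ),
    (∀ x y, T (x + y) = T x + T y) ∧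
    (∀ (c : ℝ) x, T (c • x) = c • T x) ∧
    (∀ x, T (fun n => |x n|) = fun t => |T x t|) ∧
    (∀ x : ℕ → ℝ, BddAbove (Set.range fun n => |x n|) →
      Mem (T x) ∧ N (T x) = ⨆ n, |x n|)

end BanachIdealSpace

open BanachIdealSpace

section QPAux

open scoped Classical

open Cardinal

lemma QP.ae_count {P : ℕ → Prop} :
    (∀ᵐ n ∂(Measure.count : Measure ℕ), P n) ↔ ∀ n, P n := by
  constructor
  · intro h n
    rw [ae_iff] at h
    by_contra hn
    have h2 := Measure.count_eq_zero_iff.mp h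
    rw [Set.eq_empty_iff_forall_notMem] at h2
    exact h2 n hn
  · exact fun h => MeasureTheory.ae_of_all _ h

namespace QP

variable (X : BanachIdealSpace ℕ Measure.count)

lemma mem_of_le {f g : ℕ → ℝ} (hg : X.Mem g) (h : ∀ j, |f j| ≤ |g j|) : X.Mem f :=
  (X.ideal f g (Measurable.of_discrete.aemeasurable) (ae_count.2 h) hg).1

lemma N_mono {f g : ℕ → ℝ} (hg : X.Mem g) (h : ∀ j, |f j| ≤ |g j|) : X.N f ≤ X.N g :=
  (X.ideal f g (Measurable.of_discrete.aemeasurable) (ae_count.2 h) hg).2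

lemma mem_sub {f g : ℕ → ℝ} (hf : X.Mem f) (hg : X.Mem g) : X.Mem (f - g) := by
  have h : f - g = f + (-1 : ℝ) • g := by funext j; simp; ring
  rw [h]; exact X.mem_add _ _ hf (X.mem_smul _ _ hg)

lemma N_neg (f : ℕ → ℝ) : X.N (-f) = X.N f := by
  have h : -f = (-1 : ℝ) • f := by funext j; simp
  rw [h, X.N_smul]; simp

lemma N_sub_comm (f g : ℕ → ℝ) : X.N (f - g) = X.N (g - f) := by
  rw [← N_neg X (f - g)]; congr 1; abel

lemma mem_sum {β : Type*} (s : Finset β) (g : β → ℕ → ℝ) (h : ∀ i ∈ s, X.Mem (g i)) :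
    X.Mem (∑ i ∈ s, g i) := by
  induction s using Finset.cons_induction with
  | empty => simpa using X.mem_zero
  | cons a s ha ih =>
    rw [Finset.sum_cons]
    exact X.mem_add _ _ (h a (Finset.mem_cons_self a s))
      (ih fun i hi => h i (Finset.mem_cons_of_mem hi))

lemma N_sum_le {β : Type*} (s : Finset β) (g : β → ℕ → ℝ) (h : ∀ i ∈ s, X.Mem (g i)) :
    X.N (∑ i ∈ s, g i) ≤ ∑ i ∈ s, X.N (g i) := by
  induction s using Finset.cons_induction with
  | empty => simp [X.N_zero]
  | cons a s ha ih =>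
    rw [Finset.sum_cons, Finset.sum_cons]
    calc X.N (g a + ∑ i ∈ s, g i) ≤ X.N (g a) + X.N (∑ i ∈ s, g i) :=
          X.N_add _ _ (h a (Finset.mem_cons_self a s))
            (mem_sum X s g fun i hi => h i (Finset.mem_cons_of_mem hi))
      _ ≤ X.N (g a) + ∑ i ∈ s, X.N (g i) := by
          have := ih fun i hi => h i (Finset.mem_cons_of_mem hi)
          linarith

lemma oc_iff {f : ℕ → ℝ} : f ∈ X.oc ↔ X.Mem f ∧ ∀ u : ℕ → ℕ → ℝ, (∀ n, X.Mem (u n)) →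
    (∀ n j, 0 ≤ u n j ∧ u n j ≤ |f j|) → (∀ n j, u (n + 1) j ≤ u n j) →
    (∀ j, Tendsto (fun n => u n j) atTop (𝓝 0)) →
    Tendsto (fun n => X.N (u n)) atTop (𝓝 0) := by
  unfold BanachIdealSpace.oc BanachIdealSpace.ocSet
  simp only [Set.mem_setOf_eq, ae_count]

lemma zero_mem_oc : (0 : ℕ → ℝ) ∈ X.oc := by
  rw [oc_iff]
  refine ⟨X.mem_zero, fun u hu hb hd hp => ?_⟩
  have hz : ∀ n, u n = 0 := by
    intro n; funext j
    have h1 := (hb n j).1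
    have h2 := (hb n j).2
    simp only [Pi.zero_apply, abs_zero] at h2
    simpa [Pi.zero_apply] using le_antisymm h2 h1
  have : (fun n => X.N (u n)) = fun _ => 0 := by
    funext n; rw [hz n, X.N_zero]
  rw [this]; exact tendsto_const_nhds

/-- `pc x s` : the function `|x|` restricted to the set `s`. -/
noncomputable def pc (x : ℕ → ℝ) (s : Set ℕ) : ℕ → ℝ := fun j => if j ∈ s then |x j| else 0

lemma pc_nonneg (x : ℕ → ℝ) (s : Set ℕ) (j : ℕ) : 0 ≤ pc x s j := by
  unfold pc; split <;> simp [abs_nonneg]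

lemma pc_le_abs (x : ℕ → ℝ) (s : Set ℕ) (j : ℕ) : pc x s j ≤ |x j| := by
  unfold pc; split <;> simp [abs_nonneg]

lemma abs_pc (x : ℕ → ℝ) (s : Set ℕ) (j : ℕ) : |pc x s j| = pc x s j :=
  abs_of_nonneg (pc_nonneg x s j)

lemma pc_mono (x : ℕ → ℝ) {s t : Set ℕ} (hst : s ⊆ t) (j : ℕ) : pc x s j ≤ pc x t j := by
  unfold pc
  by_cases h : j ∈ s
  · simp [h, hst h]
  · simp only [h, if_neg]
    exact pc_nonneg x t j

variable {x : ℕ → ℝ}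

lemma mem_pc (hx : X.Mem x) (s : Set ℕ) : X.Mem (pc x s) :=
  mem_of_le X hx fun j => by rw [abs_pc]; exact pc_le_abs x s j

/-- Key helper: if `0 ≤ uₘ ≤ |f|` pointwise and `uₘ → 0` pointwise, then the norms of the
restrictions of `uₘ` to a fixed finite set tend to `0`. -/
lemma tendsto_N_indicator (f : ℕ → ℝ) (hf : X.Mem f) (u : ℕ → ℕ → ℝ)
    (hb : ∀ m j, 0 ≤ u m j ∧ u m j ≤ |f j|)
    (hp : ∀ j, Tendsto (fun m => u m j) atTop (𝓝 0)) (s : Finset ℕ) :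
    Tendsto (fun m => X.N (fun j => if j ∈ s then u m j else 0)) atTop (𝓝 0) := by
  set s' := s.filter (fun j => f j ≠ 0) with hs'
  have hind : ∀ j₀ ∈ s', X.Mem (fun j => if j = j₀ then (1 : ℝ) else 0) := by
    intro j₀ hj₀
    rw [hs', Finset.mem_filter] at hj₀
    have h1 : X.Mem ((|f j₀|) • (fun j => if j = j₀ then (1 : ℝ) else 0)) := by
      apply mem_of_le X hf
      intro j
      by_cases h : j = j₀
      · subst h; simp [abs_of_nonneg (abs_nonneg (f j))]
      · simp [h, abs_nonneg]
    have h2 := X.mem_smul (|f j₀|)⁻¹ _ h1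
    rw [smul_smul, inv_mul_cancel₀ (abs_ne_zero.2 hj₀.2), one_smul] at h2
    exact h2
  have hueq : ∀ m, (fun j => if j ∈ s then u m j else 0)
      = ∑ j₀ ∈ s', (u m j₀) • (fun j => if j = j₀ then (1 : ℝ) else 0) := by
    intro m; funext j
    rw [Finset.sum_apply]
    simp only [Pi.smul_apply, smul_eq_mul, mul_ite, mul_one, mul_zero]
    rw [Finset.sum_ite_eq s' j (fun j₀ => u m j₀)]
    by_cases h : j ∈ s
    · by_cases h2 : j ∈ s'
      · simp [h, h2]
      · have hfj : f j = 0 := by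
          by_contra hfj
          exact h2 (by rw [hs', Finset.mem_filter]; exact ⟨h, hfj⟩)
        have : u m j = 0 := le_antisymm (by simpa [hfj] using (hb m j).2) (hb m j).1
        simp [h, h2, this]
    · have h2 : j ∉ s' := fun hc => h (Finset.mem_of_mem_filter j hc)
      simp [h, h2]
  have hNle : ∀ m, X.N (fun j => if j ∈ s then u m j else 0)
      ≤ ∑ j₀ ∈ s', u m j₀ * X.N (fun j => if j = j₀ then (1 : ℝ) else 0) := by
    intro m
    rw [hueq m]
    calc X.N (∑ j₀ ∈ s', (u m j₀) • (fun j => if j = j₀ then (1 : ℝ) else 0))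
        ≤ ∑ j₀ ∈ s', X.N ((u m j₀) • (fun j => if j = j₀ then (1 : ℝ) else 0)) :=
          N_sum_le X s' _ (fun j₀ hj₀ => X.mem_smul _ _ (hind j₀ hj₀))
      _ = ∑ j₀ ∈ s', u m j₀ * X.N (fun j => if j = j₀ then (1 : ℝ) else 0) := by
          apply Finset.sum_congr rfl
          intro j₀ hj₀
          rw [X.N_smul, abs_of_nonneg (hb _ j₀).1]
  have hsum : Tendsto (fun m => ∑ j₀ ∈ s', u m j₀
      * X.N (fun j => if j = j₀ then (1 : ℝ) else 0)) atTop (𝓝 0) := by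
    have h1 := tendsto_finset_sum s'
      (f := fun j₀ m => u m j₀ * X.N (fun j => if j = j₀ then (1 : ℝ) else 0))
      (a := fun j₀ => 0 * X.N (fun j => if j = j₀ then (1 : ℝ) else 0))
      (fun j₀ _ => (hp j₀).mul_const _)
    simpa using h1
  exact squeeze_zero (fun m => X.N_nonneg _) hNle hsum

/-- If the tails of `x` tend to zero in norm, `x` is order continuous. -/
lemma oc_of_tails (hx : X.Mem x)
    (h : Tendsto (fun a => X.N (pc x (Set.Ici a))) atTop (𝓝 0)) : x ∈ X.oc := by
  rw [oc_iff]
  refine ⟨hx, fun u hu hb hd hp => ?_⟩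
  rw [Metric.tendsto_atTop]
  intro ε hε
  rw [Metric.tendsto_atTop] at h
  obtain ⟨a, ha⟩ := h (ε / 2) (by linarith)
  have ha2 : X.N (pc x (Set.Ici a)) < ε / 2 := by
    have := ha a le_rfl
    rw [Real.dist_eq, sub_zero, abs_of_nonneg (X.N_nonneg _)] at this
    exact this
  have hfin := tendsto_N_indicator X x hx u hb hp (Finset.range a)
  rw [Metric.tendsto_atTop] at hfin
  obtain ⟨m₀, hm₀⟩ := hfin (ε / 2) (by linarith)
  refine ⟨m₀, fun m hm => ?_⟩
  rw [Real.dist_eq, sub_zero, abs_of_nonneg (X.N_nonneg _)]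
  have hsplit : u m = (fun j => if j ∈ Finset.range a then u m j else 0)
      + (fun j => if j ∈ Finset.range a then 0 else u m j) := by
    funext j
    simp only [Pi.add_apply]
    by_cases h : j ∈ Finset.range a
    · rw [if_pos h, if_pos h]; ring
    · rw [if_neg h, if_neg h]; ring
  have hmem1 : X.Mem (fun j => if j ∈ Finset.range a then u m j else 0) := by
    apply mem_of_le X hx
    intro j
    by_cases h : j ∈ Finset.range a
    · rw [if_pos h, abs_of_nonneg (hb m j).1]; exact (hb m j).2
    · rw [if_neg h]; simp [abs_nonneg]
  have hmem2 : X.Mem (fun j => if j ∈ Finset.range a then 0 else u m j) := by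
    apply mem_of_le X hx
    intro j
    by_cases h : j ∈ Finset.range a
    · rw [if_pos h]; simp [abs_nonneg]
    · rw [if_neg h, abs_of_nonneg (hb m j).1]; exact (hb m j).2
  have h1 : X.N (u m) ≤ X.N (fun j => if j ∈ Finset.range a then u m j else 0)
      + X.N (fun j => if j ∈ Finset.range a then 0 else u m j) := by
    nth_rewrite 1 [hsplit]
    exact X.N_add _ _ hmem1 hmem2
  have h2 : X.N (fun j => if j ∈ Finset.range a then 0 else u m j)
      ≤ X.N (pc x (Set.Ici a)) := by
    apply N_mono X (mem_pc X hx _)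
    intro j
    rw [abs_pc]
    by_cases h : j ∈ Finset.range a
    · rw [if_pos h]; simpa using pc_nonneg x _ j
    · rw [if_neg h]
      rw [abs_of_nonneg (hb m j).1]
      have hj : j ∈ Set.Ici a := by
        simp only [Finset.mem_range, not_lt] at h
        exact h
      unfold pc
      rw [if_pos hj]
      exact (hb m j).2
  have h3 := hm₀ m hm
  rw [Real.dist_eq, sub_zero, abs_of_nonneg (X.N_nonneg _)] at h3
  linarith

/-- If `x ∉ X_a` then the tails of `x` are bounded below in norm. -/
lemma tails_bounded (hx : X.Mem x) (hxoc : x ∉ X.oc) :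
    ∃ ε > 0, ∀ a, ε ≤ X.N (pc x (Set.Ici a)) := by
  by_contra hcon
  push_neg at hcon
  apply hxoc
  apply oc_of_tails X hx
  rw [Metric.tendsto_atTop]
  intro ε hε
  obtain ⟨a₀, ha₀⟩ := hcon (ε / 2) (by linarith)
  refine ⟨a₀, fun a ha => ?_⟩
  rw [Real.dist_eq, sub_zero, abs_of_nonneg (X.N_nonneg _)]
  calc X.N (pc x (Set.Ici a)) ≤ X.N (pc x (Set.Ici a₀)) := by
        apply N_mono X (mem_pc X hx _)
        intro j
        rw [abs_pc, abs_pc]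
        exact pc_mono x (Set.Ici_subset_Ici.2 ha) j
    _ < ε / 2 := ha₀
    _ < ε := by linarith

/-- Using completeness: there exist arbitrarily late finite blocks with norms bounded below. -/
lemma exists_blocks (hK : ∃ K : ℝ, ∀ y, X.Mem y → ∀ n, |y n| ≤ K * X.N y)
    (hx : X.Mem x) (hxoc : x ∉ X.oc) :
    ∃ δ > 0, ∀ a : ℕ, ∃ b, δ ≤ X.N (pc x (Set.Ico a b)) := by
  obtain ⟨ε, hε, htail⟩ := tails_bounded X hx hxoc
  by_contra hcon
  push_neg at hcon
  -- For every k there is a point beyond which all blocks have norm < ε / 2 ^ (k + 2)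
  have hA : ∀ k : ℕ, ∃ a₀ : ℕ, ∀ a ≥ a₀, ∀ b, X.N (pc x (Set.Ico a b)) < ε / 2 ^ (k + 2) := by
    intro k
    obtain ⟨a₀, ha₀⟩ := hcon (ε / 2 ^ (k + 2)) (by positivity)
    refine ⟨a₀, fun a ha b => ?_⟩
    calc X.N (pc x (Set.Ico a b)) ≤ X.N (pc x (Set.Ico a₀ b)) := by
          apply N_mono X (mem_pc X hx _)
          intro j
          rw [abs_pc, abs_pc]
          exact pc_mono x (Set.Ico_subset_Ico_left ha) j
      _ < ε / 2 ^ (k + 2) := ha₀ b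
  choose A hA using hA
  set a : ℕ → ℕ := fun k => Nat.rec (A 0) (fun k ak => max (A (k + 1)) (ak + 1)) k with ha
  have ha0 : a 0 = A 0 := rfl
  have hasucc : ∀ k, a (k + 1) = max (A (k + 1)) (a k + 1) := fun k => rfl
  have haA : ∀ k, A k ≤ a k := by
    intro k; cases k with
    | zero => exact le_of_eq ha0.symm
    | succ k => rw [hasucc]; exact le_max_left _ _
  have hastrict : ∀ k, a k < a (k + 1) := by
    intro k; rw [hasucc]
    exact lt_of_lt_of_le (Nat.lt_succ_self _) (le_max_right _ _)
  have hamono : Monotone a := monotone_nat_of_le_succ fun k => (hastrict k).le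
  have hak : ∀ k, k ≤ a k := by
    intro k
    induction k with
    | zero => exact Nat.zero_le _
    | succ k ih => exact lt_of_le_of_lt ih (hastrict k)
  set u : ℕ → ℕ → ℝ := fun k => pc x (Set.Ico (a 0) (a k)) with hu
  have humem : ∀ k, X.Mem (u k) := fun k => mem_pc X hx _
  have hblock : ∀ m n, m ≤ n → u n - u m = pc x (Set.Ico (a m) (a n)) := by
    intro m n hmn
    funext j
    have h0m : a 0 ≤ a m := hamono (Nat.zero_le m)
    have hmn' : a m ≤ a n := hamono hmn
    simp only [Pi.sub_apply]
    unfold u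
    unfold pc
    by_cases h1 : j ∈ Set.Ico (a 0) (a n)
    · by_cases h2 : j ∈ Set.Ico (a 0) (a m)
      · have : j ∉ Set.Ico (a m) (a n) := by
          intro hc; exact absurd h2.2 (not_lt.2 hc.1)
        simp [h1, h2, this]
      · have hj : a m ≤ j := by
          rcases h1 with ⟨hj0, hjn⟩
          by_contra hc
          exact h2 ⟨hj0, not_le.1 hc⟩
        have : j ∈ Set.Ico (a m) (a n) := ⟨hj, h1.2⟩
        simp [h1, h2, this]
    · have h2 : j ∉ Set.Ico (a 0) (a m) := by
        intro hc
        exact h1 ⟨hc.1, lt_of_lt_of_le hc.2 hmn'⟩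
      have h3 : j ∉ Set.Ico (a m) (a n) := by
        intro hc
        exact h1 ⟨le_trans h0m hc.1, hc.2⟩
      simp [h1, h2, h3]
  have hsmall : ∀ m n, m ≤ n → X.N (u n - u m) < ε / 2 ^ (m + 2) := by
    intro m n hmn
    rw [hblock m n hmn]
    exact hA m (a m) (haA m) (a n)
  have hcauchy : ∀ ε' : ℝ, 0 < ε' → ∃ n₀ : ℕ, ∀ m n, n₀ ≤ m → n₀ ≤ n →
      X.N (u m - u n) < ε' := by
    intro ε' hε'
    obtain ⟨n₀, hn₀⟩ := pow_unbounded_of_one_lt (ε / ε') (one_lt_two (α := ℝ))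
    refine ⟨n₀, fun m n hm hn => ?_⟩
    have key : ∀ p q, n₀ ≤ p → p ≤ q → X.N (u q - u p) < ε' := by
      intro p q hp hpq
      calc X.N (u q - u p) < ε / 2 ^ (p + 2) := hsmall p q hpq
        _ ≤ ε / 2 ^ n₀ := by
            apply div_le_div_of_nonneg_left hε.le (by positivity)
            exact pow_le_pow_right₀ one_le_two (by omega)
        _ < ε' := by
            rw [div_lt_iff₀ (by positivity)]
            calc ε < ε' * 2 ^ n₀ := by
                  rw [← div_lt_iff₀' hε']
                  · exact lt_of_lt_of_le hn₀ le_rfl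
              _ ≤ ε' * 2 ^ n₀ := le_rfl
    rcases le_total m n with h | h
    · rw [N_sub_comm]; exact key m n hm h
    · exact key n m hn h
  obtain ⟨f, hfmem, hflim⟩ := X.complete u humem hcauchy
  obtain ⟨K, hKb⟩ := hK
  -- coordinatewise convergence
  have hcoord : ∀ j, Tendsto (fun k => u k j) atTop (𝓝 (f j)) := by
    intro j
    rw [tendsto_iff_dist_tendsto_zero]
    apply squeeze_zero (fun k => dist_nonneg)
      (g := fun k => K * X.N (u k - f))
    · intro k
      rw [Real.dist_eq]
      have := hKb (u k - f) (mem_sub X (humem k) hfmem) j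
      simpa using this
    · have := hflim.const_mul K
      simpa using this
  -- identify f
  have hfeq : f = pc x (Set.Ici (a 0)) := by
    funext j
    by_cases hj : a 0 ≤ j
    · have heval : ∀ k ≥ j + 1, u k j = |x j| := by
        intro k hk
        have hjk : j ∈ Set.Ico (a 0) (a k) := ⟨hj, lt_of_lt_of_le (Nat.lt_succ_self j |>.trans_le hk) (hak k)⟩
        simp only [hu]
        exact if_pos hjk
      have : Tendsto (fun k => u k j) atTop (𝓝 (|x j|)) := by
        apply Tendsto.congr' _ tendsto_const_nhds
        filter_upwards [eventually_ge_atTop (j + 1)] with k hk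
        exact (heval k hk).symm
      have hlim := tendsto_nhds_unique (hcoord j) this
      have hpc : pc x (Set.Ici (a 0)) j = |x j| := if_pos (Set.mem_Ici.2 hj)
      rw [hpc]
      exact hlim
    · have heval : ∀ k, u k j = 0 := by
        intro k
        have hjk : j ∉ Set.Ico (a 0) (a k) := fun hc => hj hc.1
        simp only [hu]
        exact if_neg hjk
      have : Tendsto (fun k => u k j) atTop (𝓝 (0 : ℝ)) := by
        simp only [heval]; exact tendsto_const_nhds
      have hlim := tendsto_nhds_unique (hcoord j) this
      have hpc : pc x (Set.Ici (a 0)) j = 0 := if_neg (by simpa using hj)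
      rw [hpc]
      exact hlim
  -- contradiction with the tails
  have hdiff : ∀ k, u k - f = -(pc x (Set.Ici (a k))) := by
    intro k
    funext j
    simp only [Pi.sub_apply, Pi.neg_apply]
    rw [hfeq]
    unfold u
    unfold pc
    by_cases h1 : j ∈ Set.Ico (a 0) (a k)
    · have h2 : j ∈ Set.Ici (a 0) := Set.mem_Ici.2 h1.1
      have h3 : j ∉ Set.Ici (a k) := by
        simp only [Set.mem_Ici, not_le]
        exact h1.2
      simp [h1, h2, h3]
    · by_cases h2 : a 0 ≤ j
      · have h3 : a k ≤ j := by
          by_contra hc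
          exact h1 ⟨h2, not_le.1 hc⟩
        simp [h1, Set.mem_Ici.2 h2, Set.mem_Ici.2 h3]
      · have h3 : j ∉ Set.Ici (a 0) := by simpa using h2
        have h4 : j ∉ Set.Ici (a k) := by
          simp only [Set.mem_Ici, not_le] at h3 ⊢
          exact lt_of_lt_of_le h3 (hamono (Nat.zero_le k))
        simp [h1, h3, h4]
  have hlow : ∀ k, ε ≤ X.N (u k - f) := by
    intro k
    rw [hdiff k, N_neg]
    exact htail (a k)
  rw [Metric.tendsto_atTop] at hflim
  obtain ⟨k₀, hk₀⟩ := hflim ε hε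
  have := hk₀ k₀ le_rfl
  rw [Real.dist_eq, sub_zero, abs_of_nonneg (X.N_nonneg _)] at this
  exact absurd (hlow k₀) (not_le.2 this)

end QP
namespace QP

variable (X : BanachIdealSpace ℕ Measure.count) {x : ℕ → ℝ}

lemma finsupp_oc (f : ℕ → ℝ) (hf : X.Mem f) (s : Finset ℕ) (hsupp : ∀ j ∉ s, f j = 0) :
    f ∈ X.oc := by
  rw [oc_iff]
  refine ⟨hf, fun u hu hb hd hp => ?_⟩
  have hueq : ∀ m, u m = fun j => if j ∈ s then u m j else 0 := by
    intro m; funext j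
    by_cases h : j ∈ s
    · rw [if_pos h]
    · rw [if_neg h]
      have := (hb m j).2
      rw [hsupp j h] at this
      simp only [abs_zero] at this
      exact le_antisymm this (hb m j).1
  have := tendsto_N_indicator X f hf u hb hp s
  apply this.congr
  intro m
  rw [← hueq m]

lemma distIn_le_of_mem (f g : ℕ → ℝ) (hg : g ∈ X.oc) : distIn X.N f X.oc ≤ X.N (f - g) := by
  apply csInf_le
  · exact ⟨0, by rintro r ⟨g', _, rfl⟩; exact X.N_nonneg _⟩
  · exact ⟨g, hg, rfl⟩

lemma le_distIn (f : ℕ → ℝ) {δ : ℝ} (h : ∀ g ∈ X.oc, δ ≤ X.N (f - g)) :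
    δ ≤ distIn X.N f X.oc := by
  apply le_csInf
  · exact ⟨X.N (f - 0), 0, zero_mem_oc X, rfl⟩
  · rintro r ⟨g, hg, rfl⟩; exact h g hg

/-- Lower estimate for the distance of a "heavy" restriction of `x` to `X_a`. -/
lemma dist_lower (hx : X.Mem x) {δ : ℝ} (S : Set ℕ)
    (hS : ∀ m : ℕ, ∃ s : Set ℕ, s ⊆ S ∩ Set.Ici m ∧ δ ≤ X.N (pc x s)) :
    ∀ g ∈ X.oc, δ ≤ X.N (pc x S - g) := by
  intro g hg
  have hgmem : X.Mem g := (oc_iff X).mp hg |>.1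
  set v : ℕ → ℕ → ℝ := fun m => pc x (S ∩ Set.Ici m) with hv
  have hvN : ∀ m, δ ≤ X.N (v m) := by
    intro m
    obtain ⟨s, hs1, hs2⟩ := hS m
    calc δ ≤ X.N (pc x s) := hs2
      _ ≤ X.N (v m) := by
          apply N_mono X (mem_pc X hx _)
          intro j
          rw [abs_pc, abs_pc]
          exact pc_mono x hs1 j
  set w : ℕ → ℕ → ℝ := fun m j => min (v m j) |g j| with hw
  have hwmem : ∀ m, X.Mem (w m) := by
    intro m
    apply mem_of_le X hgmem
    intro j
    have h0 : 0 ≤ w m j := le_min (pc_nonneg x _ j) (abs_nonneg _)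
    rw [abs_of_nonneg h0]
    exact min_le_right _ _
  have hwlim : Tendsto (fun m => X.N (w m)) atTop (𝓝 0) := by
    apply ((oc_iff X).mp hg).2 w hwmem
    · intro m j
      exact ⟨le_min (pc_nonneg x _ j) (abs_nonneg _), min_le_right _ _⟩
    · intro m j
      apply min_le_min _ le_rfl
      exact pc_mono x (Set.inter_subset_inter_right S (Set.Ici_subset_Ici.2 (Nat.le_succ m))) j
    · intro j
      apply tendsto_atTop_of_eventually_const (i₀ := j + 1)
      intro m hm
      have hv0 : v m j = 0 := by
        have : j ∉ S ∩ Set.Ici m := by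
          rintro ⟨-, hj⟩
          rw [Set.mem_Ici] at hj
          omega
        exact if_neg this
      simp only [hw, hv0]
      exact min_eq_left (abs_nonneg _)
  have hkey : ∀ m, δ - X.N (w m) ≤ X.N (pc x S - g) := by
    intro m
    have hsplit : v m = (v m - w m) + w m := by funext j; simp
    have hmem1 : X.Mem (v m - w m) := mem_sub X (mem_pc X hx _) (hwmem m)
    have h1 : X.N (v m) ≤ X.N (v m - w m) + X.N (w m) := by
      nth_rewrite 1 [hsplit]
      exact X.N_add _ _ hmem1 (hwmem m)
    have h2 : X.N (v m - w m) ≤ X.N (pc x S - g) := by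
      apply N_mono X (mem_sub X (mem_pc X hx _) hgmem)
      intro j
      simp only [Pi.sub_apply]
      rcases le_or_gt (v m j) |g j| with h | h
      · have : w m j = v m j := min_eq_left h
        rw [this, sub_self, abs_zero]
        exact abs_nonneg _
      · have hwj : w m j = |g j| := min_eq_right h.le
        rw [hwj, abs_of_nonneg (by linarith : (0:ℝ) ≤ v m j - |g j|)]
        have hvle : v m j ≤ pc x S j := pc_mono x Set.inter_subset_left j
        have habs : pc x S j - |g j| ≤ |pc x S j - g j| := by
          calc pc x S j - |g j| = |pc x S j| - |g j| := by rw [abs_pc]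
            _ ≤ |pc x S j - g j| := abs_sub_abs_le_abs_sub _ _
        linarith
    have := hvN m
    linarith
  have hlim : Tendsto (fun m => δ - X.N (w m)) atTop (𝓝 δ) := by
    have := hwlim.const_sub δ
    simpa using this
  exact le_of_tendsto hlim (Eventually.of_forall hkey)

/-- Upper estimate: signed sums over an almost disjoint family are uniformly close to `X_a`. -/
lemma dist_upper (hx : X.Mem x) {ι : Type} (H : ι → Set ℕ)
    (F : Finset ι) (hfin : ∀ i ∈ F, ∀ i' ∈ F, i ≠ i' → (H i ∩ H i').Finite)
    (s : ι → ℝ) (hs : ∀ i, |s i| ≤ 1) :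
    distIn X.N (∑ i ∈ F, s i • pc x (H i)) X.oc ≤ X.N (fun j => |x j|) := by
  classical
  set z : ℕ → ℝ := ∑ i ∈ F, s i • pc x (H i) with hz
  have hzmem : X.Mem z := mem_sum X F _ (fun i _ => X.mem_smul _ _ (mem_pc X hx _))
  set E : Set ℕ := ⋃ p ∈ (F ×ˢ F : Finset (ι × ι)),
    (if p.1 = p.2 then (∅ : Set ℕ) else H p.1 ∩ H p.2) with hE
  have hEfin : E.Finite := by
    apply Set.Finite.biUnion (Finset.finite_toSet _)
    intro p hp
    rw [Finset.mem_coe, Finset.mem_product] at hp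
    by_cases h : p.1 = p.2
    · rw [if_pos h]; exact Set.finite_empty
    · rw [if_neg h]; exact hfin p.1 hp.1 p.2 hp.2 h
  have hEmem : ∀ j, ∀ i ∈ F, ∀ i' ∈ F, i ≠ i' → j ∈ H i → j ∈ H i' → j ∈ E := by
    intro j i hi i' hi' hne hj hj'
    apply Set.mem_biUnion (show ((i, i') : ι × ι) ∈ (F ×ˢ F : Finset (ι × ι)) by
      rw [Finset.mem_product]; exact ⟨hi, hi'⟩)
    rw [if_neg hne]
    exact ⟨hj, hj'⟩
  set g : ℕ → ℝ := fun j => if j ∈ E then z j else 0 with hg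
  have hgmem : X.Mem g := by
    apply mem_of_le X hzmem
    intro j
    by_cases h : j ∈ E
    · simp only [hg, if_pos h]; exact le_rfl
    · simp only [hg, if_neg h]; simp [abs_nonneg]
  have hgoc : g ∈ X.oc := by
    apply finsupp_oc X g hgmem hEfin.toFinset
    intro j hj
    rw [Set.Finite.mem_toFinset] at hj
    exact if_neg hj
  calc distIn X.N z X.oc ≤ X.N (z - g) := distIn_le_of_mem X z g hgoc
    _ ≤ X.N (fun j => |x j|) := by
        apply N_mono X (mem_of_le X hx (fun j => by rw [abs_abs]))
        intro j
        rw [abs_abs]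
        simp only [Pi.sub_apply]
        by_cases h : j ∈ E
        · simp only [hg, if_pos h, sub_self, abs_zero]
          exact abs_nonneg _
        · simp only [hg, if_neg h, sub_zero]
          have hzj : z j = ∑ i ∈ F, s i * pc x (H i) j := by
            rw [hz, Finset.sum_apply]
            simp [Pi.smul_apply]
          rw [hzj]
          by_cases hex : ∃ i ∈ F, j ∈ H i
          · obtain ⟨i₀, hi₀F, hi₀⟩ := hex
            rw [Finset.sum_eq_single i₀]
            · calc |s i₀ * pc x (H i₀) j| = |s i₀| * |pc x (H i₀) j| := abs_mul _ _
                _ ≤ 1 * |x j| := by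
                    apply mul_le_mul (hs i₀) _ (abs_nonneg _) zero_le_one
                    rw [abs_pc]
                    exact pc_le_abs x _ j
                _ = |x j| := one_mul _
            · intro i hiF hne
              have hjH : j ∉ H i := fun hc => h (hEmem j i hiF i₀ hi₀F hne hc hi₀)
              have : pc x (H i) j = 0 := if_neg hjH
              rw [this, mul_zero]
            · intro hc; exact absurd hi₀F hc
          · push_neg at hex
            rw [Finset.sum_eq_zero]
            · simp [abs_nonneg]
            · intro i hiF
              have : pc x (H i) j = 0 := if_neg (hex i hiF)
              rw [this, mul_zero]

/-- The almost disjoint family indexed by `ℕ → Bool`. -/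
def adSet (i : ℕ → Bool) : Set ℕ :=
  Set.range fun n => Encodable.encode ((List.range n).map i)

lemma adSet_infinite (i : ℕ → Bool) : (adSet i).Infinite := by
  apply Set.infinite_range_of_injective
  intro n m h
  have := Encodable.encode_injective h
  have hlen := congrArg List.length this
  simpa using hlen

lemma adSet_almost_disjoint {i i' : ℕ → Bool} (h : i ≠ i') :
    (adSet i ∩ adSet i').Finite := by
  obtain ⟨i₀, hi₀⟩ := Function.ne_iff.mp h
  apply Set.Finite.subset
    (Set.Finite.image (fun n => Encodable.encode ((List.range n).map i)) (Set.finite_Iic i₀))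
  rintro m ⟨⟨n, rfl⟩, ⟨n', hn'⟩⟩
  have hls := Encodable.encode_injective hn'
  have hlen : n' = n := by
    have := congrArg List.length hls
    simpa using this
  subst hlen
  have hn : n' ≤ i₀ := by
    by_contra hc
    push_neg at hc
    have := (List.map_inj_left.mp hls.symm) i₀ (List.mem_range.2 hc)
    exact hi₀ this
  exact ⟨n', Set.mem_Iic.2 hn, rfl⟩

end QP

namespace QP

open Cardinal

variable {ι : Type}

/-- A set is *free* for a set mapping `G` if no element lies in the image of another. -/
def FreeFor (G : ι → Finset ι) (S : Set ι) : Prop :=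
  ∀ i ∈ S, ∀ j ∈ S, j ≠ i → j ∉ G i

lemma free_aux {lam : Cardinal} (hreg : lam.IsRegular) (hlam : ℵ₀ < lam) :
    ∀ n : ℕ, ∀ G : ι → Finset ι, ∀ S : Set ι, #S = lam → (∀ i ∈ S, (G i).card ≤ n) →
    ∃ S' ⊆ S, #S' = lam ∧ FreeFor G S' := by
  intro n
  induction n with
  | zero =>
    intro G S hcard hbound
    refine ⟨S, subset_rfl, hcard, ?_⟩
    intro i hi j hj hne hjG
    have h0 := hbound i hi
    rw [Nat.le_zero, Finset.card_eq_zero] at h0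
    rw [h0] at hjG
    exact absurd hjG (Finset.notMem_empty j)
  | succ n ih =>
    intro G S hcard hbound
    by_cases hex : ∃ t : ι, lam ≤ #({i ∈ S | t ∈ G i} : Set ι)
    · obtain ⟨t, ht⟩ := hex
      have h1 : lam ≤ #(({i ∈ S | t ∈ G i} \ {t} : Set ι)) := by
        by_contra hc
        push_neg at hc
        have hsub : ({i ∈ S | t ∈ G i} : Set ι) ⊆ ({i ∈ S | t ∈ G i} \ {t}) ∪ {t} := by
          intro i hi
          by_cases h : i = t
          · exact Or.inr (by simp [h])
          · exact Or.inl ⟨hi, by simp [h]⟩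
        have h2 : #({i ∈ S | t ∈ G i} : Set ι)
            ≤ #(({i ∈ S | t ∈ G i} \ {t} : Set ι)) + #({t} : Set ι) :=
          (mk_le_mk_of_subset hsub).trans (mk_union_le _ _)
        have h3 : #({t} : Set ι) < lam := by
          rw [mk_singleton]
          exact lt_of_lt_of_le one_lt_aleph0 hreg.aleph0_le
        have h4 := Cardinal.add_lt_of_lt hreg.aleph0_le hc h3
        exact absurd (ht.trans h2) (not_le.2 h4)
      obtain ⟨S₂, hS₂sub, hS₂⟩ := Cardinal.le_mk_iff_exists_subset.mp h1
      obtain ⟨S', hS'sub, hS'card, hS'free⟩ := ih (fun i => (G i).erase t) S₂ hS₂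
        (fun i hi => by
          have hiS : i ∈ S ∧ t ∈ G i := (hS₂sub hi).1
          calc ((G i).erase t).card = (G i).card - 1 := Finset.card_erase_of_mem hiS.2
            _ ≤ n := by have := hbound i hiS.1; omega)
      refine ⟨S', ?_, hS'card, ?_⟩
      · exact hS'sub.trans (hS₂sub.trans (fun i hi => hi.1.1))
      · intro i hi j hj hne hjG
        by_cases hjt : j = t
        · subst hjt
          exact (hS₂sub (hS'sub hj)).2 rfl
        · exact hS'free i hi j hj hne (Finset.mem_erase.2 ⟨hjt, hjG⟩)
    · push_neg at hex
      have hzorn : ∀ c ⊆ {T : Set ι | T ⊆ S ∧ FreeFor G T}, IsChain (· ⊆ ·) c →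
          ∃ ub ∈ {T : Set ι | T ⊆ S ∧ FreeFor G T}, ∀ s ∈ c, s ⊆ ub := by
        intro c hc hchain
        refine ⟨⋃₀ c, ⟨?_, ?_⟩, fun s hs => Set.subset_sUnion_of_mem hs⟩
        · exact Set.sUnion_subset fun T hT => (hc hT).1
        · intro i hi j hj hne hjG
          obtain ⟨T₁, hT₁c, hiT₁⟩ := hi
          obtain ⟨T₂, hT₂c, hjT₂⟩ := hj
          rcases eq_or_ne T₁ T₂ with h | h
          · subst h; exact (hc hT₁c).2 i hiT₁ j hjT₂ hne hjG
          · rcases hchain hT₁c hT₂c h with h | h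
            · exact (hc hT₂c).2 i (h hiT₁) j hjT₂ hne hjG
            · exact (hc hT₁c).2 i hiT₁ j (h hjT₂) hne hjG
      obtain ⟨M, hM⟩ := zorn_subset {T : Set ι | T ⊆ S ∧ FreeFor G T} hzorn
      have hMS : M ⊆ S := hM.prop.1
      have hMfree : FreeFor G M := hM.prop.2
      have hMcard : lam ≤ #M := by
        by_contra hMlt
        push_neg at hMlt
        set bad : Set ι := (M ∪ ⋃ i ∈ M, (G i : Set ι)) ∪ ⋃ j ∈ M, {i ∈ S | j ∈ G i} with hbad
        have hbadlt : #bad < lam := by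
          have c1 : #(⋃ i ∈ M, (G i : Set ι)) < lam := by
            refine lt_of_le_of_lt (b := #M * ℵ₀) ((mk_biUnion_le (fun i => (G i : Set ι)) M).trans ?_) ?_
            · have hsup : (⨆ x : ↥M, #(G (x : ι) : Set ι)) ≤ ℵ₀ :=
                ciSup_le' fun i => (lt_aleph0_of_finite _).le
              exact mul_le_mul_right hsup _
            · exact Cardinal.mul_lt_of_lt hreg.aleph0_le hMlt hlam
          have c2 : #(⋃ j ∈ M, ({i ∈ S | j ∈ G i} : Set ι)) < lam := by
            refine lt_of_le_of_lt (mk_biUnion_le (fun j => ({i ∈ S | j ∈ G i} : Set ι)) M) ?_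
            exact Cardinal.mul_lt_of_lt hreg.aleph0_le hMlt
              (Cardinal.iSup_lt_of_isRegular hreg hMlt fun j => hex _)
          calc #bad ≤ #((M ∪ ⋃ i ∈ M, (G i : Set ι)) : Set ι)
              + #(⋃ j ∈ M, ({i ∈ S | j ∈ G i} : Set ι)) := mk_union_le _ _
            _ ≤ (#M + #(⋃ i ∈ M, (G i : Set ι)))
              + #(⋃ j ∈ M, ({i ∈ S | j ∈ G i} : Set ι)) := by
                have := mk_union_le M (⋃ i ∈ M, (G i : Set ι))
                exact add_le_add_left this _
            _ < lam := Cardinal.add_lt_of_lt hreg.aleph0_le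
                (Cardinal.add_lt_of_lt hreg.aleph0_le hMlt c1) c2
        have hnot : ¬(S ⊆ bad) := by
          intro hsub
          have := mk_le_mk_of_subset hsub
          rw [hcard] at this
          exact absurd (this.trans_lt hbadlt) (lt_irrefl lam)
        obtain ⟨i₀, hi₀S, hi₀bad⟩ := Set.not_subset.mp hnot
        have hnew : insert i₀ M ∈ {T : Set ι | T ⊆ S ∧ FreeFor G T} := by
          refine ⟨Set.insert_subset hi₀S hMS, ?_⟩
          intro i hi j hj hne hjG
          rcases hi with hi | hi <;> rcases hj with hj | hj
          · subst hi; subst hj; exact hne rfl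
          · subst hi
            apply hi₀bad
            exact Or.inr (Set.mem_biUnion hj ⟨hi₀S, hjG⟩)
          · subst hj
            apply hi₀bad
            exact Or.inl (Or.inr (Set.mem_biUnion hi hjG))
          · exact hMfree i hi j hj hne hjG
        have hsub2 := hM.2 hnew (Set.subset_insert i₀ M)
        have : i₀ ∈ M := hsub2 (Set.mem_insert i₀ M)
        exact hi₀bad (Or.inl (Or.inl this))
      refine ⟨M, hMS, ?_, hMfree⟩
      exact le_antisymm (hcard ▸ mk_le_mk_of_subset hMS) hMcard

lemma free_subset {lam : Cardinal} (hreg : lam.IsRegular) (hlam : ℵ₀ < lam)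
    (G : ι → Finset ι) (S : Set ι) (hS : lam ≤ #S) :
    ∃ S' ⊆ S, #S' = lam ∧ FreeFor G S' := by
  obtain ⟨S₀, hS₀sub, hS₀⟩ := Cardinal.le_mk_iff_exists_subset.mp hS
  have hex : ∃ n : ℕ, lam ≤ #({i ∈ S₀ | (G i).card ≤ n} : Set ι) := by
    by_contra hc
    push_neg at hc
    have hcover : S₀ ⊆ ⋃ n : ℕ, ({i ∈ S₀ | (G i).card ≤ n} : Set ι) := by
      intro i hi
      exact Set.mem_iUnion.2 ⟨(G i).card, hi, le_rfl⟩
    have hsup : ⨆ n : ℕ, #({i ∈ S₀ | (G i).card ≤ n} : Set ι) < lam :=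
      Cardinal.iSup_lt_of_isRegular hreg (by rw [mk_nat]; exact hlam) fun n => hc n
    have h1 : #S₀ < lam := by
      calc #S₀ ≤ #(⋃ n : ℕ, ({i ∈ S₀ | (G i).card ≤ n} : Set ι)) := mk_le_mk_of_subset hcover
        _ ≤ #ℕ * ⨆ n : ℕ, #({i ∈ S₀ | (G i).card ≤ n} : Set ι) := mk_iUnion_le _
        _ < lam := by
            rw [mk_nat]
            exact Cardinal.mul_lt_of_lt hreg.aleph0_le hlam hsup
    rw [hS₀] at h1
    exact lt_irrefl lam h1
  obtain ⟨n, hn⟩ := hex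
  obtain ⟨S₁, hS₁sub, hS₁⟩ := Cardinal.le_mk_iff_exists_subset.mp hn
  obtain ⟨S', hS'sub, hS'card, hS'free⟩ := free_aux hreg hlam n G S₁ hS₁
    (fun i hi => (hS₁sub hi).2)
  exact ⟨S', hS'sub.trans ((hS₁sub.trans fun i hi => hi.1).trans hS₀sub), hS'card, hS'free⟩

/-- The core cardinality argument: a dual space admitting a `c₀(𝔠)`-like family of
functionals must have cardinality greater than the continuum. -/
lemma card_core {V : Type} [NormedAddCommGroup V] [NormedSpace ℝ V]
    (e : (ℕ → Bool) → StrongDual ℝ V) (C t : ℝ) (ht : 0 < t)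
    (hC : ∀ (v : V) (F : Finset (ℕ → Bool)), ∑ i ∈ F, |e i v| ≤ C * ‖v‖)
    (he : ∀ i, ∃ v, ‖v‖ ≤ 1 ∧ t ≤ e i v) :
    Cardinal.continuum < #(StrongDual ℝ V) := by
  classical
  have hmkι : #(ℕ → Bool) = Cardinal.continuum := by
    rw [Cardinal.mk_arrow, Cardinal.mk_bool, mk_nat]
    simp [Cardinal.two_power_aleph0]
  set lam : Cardinal := Cardinal.continuum.ord.cof with hlamdef
  have hlim : Order.IsSuccLimit Cardinal.continuum.ord := Cardinal.isSuccLimit_ord Cardinal.aleph0_le_continuum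
  have hreg : lam.IsRegular := Cardinal.isRegular_cof hlim
  have hlamle : lam ≤ Cardinal.continuum := by
    have := Ordinal.cof_le_card Cardinal.continuum.ord
    rwa [Cardinal.card_ord] at this
  have hpow : Cardinal.continuum < 2 ^ lam := by
    have h1 := Cardinal.lt_power_cof (Cardinal.aleph0_le_continuum)
    calc Cardinal.continuum < Cardinal.continuum ^ lam := h1
      _ = 2 ^ lam := by
          rw [← Cardinal.two_power_aleph0, ← Cardinal.power_mul,
            Cardinal.mul_eq_right hreg.aleph0_le hreg.aleph0_le Cardinal.aleph0_ne_zero]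
  have hlam : ℵ₀ < lam := by
    rcases lt_or_eq_of_le hreg.aleph0_le with h | h
    · exact h
    · exfalso
      rw [← h, Cardinal.two_power_aleph0] at hpow
      exact lt_irrefl _ hpow
  choose v hv1 hv2 using he
  have hsummable : ∀ w : V, Summable (fun i => |e i w|) :=
    fun w => summable_of_sum_le (fun _ => abs_nonneg _) (hC w)
  have hG : ∀ i, ∃ s : Finset (ℕ → Bool), ∀ T : Finset (ℕ → Bool), Disjoint T s →
      ∑ i' ∈ T, |e i' (v i)| < t / 2 := by
    intro i
    have hsum := hsummable (v i)
    rw [summable_iff_vanishing] at hsum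
    obtain ⟨s, hs⟩ := hsum (Set.Iio (t / 2)) (Iio_mem_nhds (by linarith))
    exact ⟨s, fun T hT => hs T hT⟩
  choose G hGs using hG
  obtain ⟨S', hS'sub, hS'card, hS'free⟩ := free_subset hreg hlam G Set.univ
    (by rw [mk_univ, hmkι]; exact hlamle)
  -- finite subsums over the subtype
  have hfinsub : ∀ (w : V) (F : Finset ↥S'), ∑ i ∈ F, |e ↑i w| ≤ C * ‖w‖ := by
    intro w F
    have h1 : ∑ i ∈ F, |e ↑i w|
        = ∑ i' ∈ F.map (Function.Embedding.subtype _), |e i' w| := by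
      rw [Finset.sum_map]
      rfl
    rw [h1]
    exact hC w _
  have hsub : ∀ w : V, Summable (fun i : ↥S' => |e ↑i w|) := by
    intro w
    exact summable_of_sum_le (fun _ => abs_nonneg _) (hfinsub w)
  have key : ∀ (c : ↥S' → ℝ), (∀ i, |c i| ≤ 1) → ∀ w, Summable (fun i : ↥S' => c i * e ↑i w) := by
    intro c hc w
    apply Summable.of_norm_bounded (hsub w)
    intro i
    rw [Real.norm_eq_abs, abs_mul]
    calc |c i| * |e ↑i w| ≤ 1 * |e ↑i w| := mul_le_mul_of_nonneg_right (hc i) (abs_nonneg _)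
      _ = |e ↑i w| := one_mul _
  set χ : Set ↥S' → ↥S' → ℝ := fun T i => if i ∈ T then 1 else 0 with hχ
  have hχle : ∀ T i, |χ T i| ≤ 1 := by
    intro T i
    simp only [hχ]
    split <;> simp
  have hφbound : ∀ (T : Set ↥S') (w : V), |∑' i : ↥S', χ T i * e ↑i w| ≤ C * ‖w‖ := by
    intro T w
    have hsummable2 := key (χ T) (hχle T) w
    calc |∑' i : ↥S', χ T i * e ↑i w| ≤ ∑' i : ↥S', |χ T i * e ↑i w| := by
          have habs : Summable (fun i : ↥S' => |χ T i * e ↑i w|) := hsummable2.abs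
          have h2 := norm_tsum_le_tsum_norm (f := fun i : ↥S' => χ T i * e ↑i w)
            (by simp only [Real.norm_eq_abs]; exact habs)
          simp only [Real.norm_eq_abs] at h2
          exact h2
      _ ≤ ∑' i : ↥S', |e ↑i w| := by
          apply Summable.tsum_le_tsum _ hsummable2.abs (hsub w)
          intro i
          rw [abs_mul]
          calc |χ T i| * |e ↑i w| ≤ 1 * |e ↑i w| :=
                mul_le_mul_of_nonneg_right (hχle T i) (abs_nonneg _)
            _ = |e ↑i w| := one_mul _
      _ ≤ C * ‖w‖ := Summable.tsum_le_of_sum_le (hsub w) (hfinsub w)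
  let φ : Set ↥S' → StrongDual ℝ V := fun T =>
    LinearMap.mkContinuous
      { toFun := fun w => ∑' i : ↥S', χ T i * e ↑i w
        map_add' := by
          intro w₁ w₂
          rw [← Summable.tsum_add (key (χ T) (hχle T) w₁) (key (χ T) (hχle T) w₂)]
          apply tsum_congr
          intro i
          rw [map_add]
          ring
        map_smul' := by
          intro c w
          simp only [RingHom.id_apply, smul_eq_mul]
          rw [← tsum_mul_left]
          apply tsum_congr
          intro i
          rw [ContinuousLinearMap.map_smul, smul_eq_mul]
          ring }
      C (fun w => by rw [Real.norm_eq_abs]; exact hφbound T w)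
  have hφapp : ∀ (T : Set ↥S') (w : V), φ T w = ∑' i : ↥S', χ T i * e ↑i w := fun T w => rfl
  have hmain : ∀ (T T' : Set ↥S') (i₀ : ↥S'), i₀ ∈ T → i₀ ∉ T' → φ T ≠ φ T' := by
    intro T T' i₀ hi₀T hi₀T' heq
    set w₀ : V := v ↑i₀ with hw₀
    set d : ↥S' → ℝ := fun i => χ T i - χ T' i with hd
    have hdle : ∀ i, |d i| ≤ 1 := by
      intro i
      simp only [hd, hχ]
      split <;> split <;> norm_num
    have hdsum : Summable (fun i : ↥S' => d i * e ↑i w₀) := key d hdle w₀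
    have hzero : (0 : ℝ) = ∑' i : ↥S', d i * e ↑i w₀ := by
      have h1 : φ T w₀ = φ T' w₀ := by rw [heq]
      rw [hφapp, hφapp] at h1
      rw [← sub_eq_zero] at h1
      rw [← Summable.tsum_sub (key (χ T) (hχle T) w₀) (key (χ T') (hχle T') w₀)] at h1
      rw [← h1]
      apply tsum_congr
      intro i
      simp only [hd]
      ring
    have hsplit := Summable.tsum_eq_add_tsum_ite hdsum i₀
    have hdi₀ : d i₀ = 1 := by
      simp only [hd, hχ, if_pos hi₀T, if_neg hi₀T']
      norm_num
    -- tail bound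
    have htailsummable : Summable (fun i : ↥S' => if i = i₀ then (0:ℝ) else |e ↑i w₀|) := by
      apply Summable.of_nonneg_of_le _ _ (hsub w₀)
      · intro i; split <;> simp [abs_nonneg]
      · intro i; split <;> simp [abs_nonneg]
    have htail : |∑' i : ↥S', if i = i₀ then (0:ℝ) else d i * e ↑i w₀| ≤ t / 2 := by
      have hsum2 : Summable (fun i : ↥S' => if i = i₀ then (0:ℝ) else d i * e ↑i w₀) := by
        apply Summable.of_norm_bounded (hsub w₀)
        intro i
        rw [Real.norm_eq_abs]
        split
        · simp [abs_nonneg]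
        · rw [abs_mul]
          calc |d i| * |e ↑i w₀| ≤ 1 * |e ↑i w₀| :=
                mul_le_mul_of_nonneg_right (hdle i) (abs_nonneg _)
            _ = |e ↑i w₀| := one_mul _
      calc |∑' i : ↥S', if i = i₀ then (0:ℝ) else d i * e ↑i w₀|
          ≤ ∑' i : ↥S', if i = i₀ then (0:ℝ) else |e ↑i w₀| := by
            have hb : ∀ i : ↥S', ‖if i = i₀ then (0:ℝ) else d i * e ↑i w₀‖
                ≤ (if i = i₀ then (0:ℝ) else |e ↑i w₀|) := by
              intro i
              rw [Real.norm_eq_abs]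
              split
              · simp
              · rw [abs_mul]
                calc |d i| * |e ↑i w₀| ≤ 1 * |e ↑i w₀| :=
                      mul_le_mul_of_nonneg_right (hdle i) (abs_nonneg _)
                  _ = |e ↑i w₀| := one_mul _
            have hnormsum : Summable (fun i : ↥S' => ‖if i = i₀ then (0:ℝ) else d i * e ↑i w₀‖) :=
              Summable.of_nonneg_of_le (fun i => norm_nonneg _) hb htailsummable
            calc |∑' i : ↥S', if i = i₀ then (0:ℝ) else d i * e ↑i w₀|
                ≤ ∑' i : ↥S', ‖if i = i₀ then (0:ℝ) else d i * e ↑i w₀‖ := by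
                  have h2 := norm_tsum_le_tsum_norm hnormsum
                  rwa [Real.norm_eq_abs] at h2
              _ ≤ ∑' i : ↥S', (if i = i₀ then (0:ℝ) else |e ↑i w₀|) :=
                  Summable.tsum_le_tsum hb hnormsum htailsummable
        _ ≤ t / 2 := by
            apply Summable.tsum_le_of_sum_le htailsummable
            intro F
            have h0 : (if i₀ = i₀ then (0:ℝ) else |e ↑i₀ w₀|) = 0 := if_pos rfl
            rw [← Finset.sum_erase F h0]
            have heq2 : ∑ i ∈ F.erase i₀, (if i = i₀ then (0:ℝ) else |e ↑i w₀|)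
                = ∑ i ∈ F.erase i₀, |e ↑i w₀| := by
              apply Finset.sum_congr rfl
              intro i hi
              rw [if_neg (Finset.mem_erase.mp hi).1]
            rw [heq2]
            have h3 : ∑ i ∈ F.erase i₀, |e ↑i w₀|
                = ∑ i' ∈ (F.erase i₀).map (Function.Embedding.subtype _), |e i' w₀| := by
              rw [Finset.sum_map]; rfl
            rw [h3]
            have hdisj : Disjoint ((F.erase i₀).map (Function.Embedding.subtype _)) (G ↑i₀) := by
              rw [Finset.disjoint_left]
              intro a ha
              rw [Finset.mem_map] at ha
              obtain ⟨i, hi, rfl⟩ := ha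
              have hine : (i : ℕ → Bool) ≠ ↑i₀ :=
                fun hc => (Finset.mem_erase.mp hi).1 (Subtype.coe_injective hc)
              exact hS'free ↑i₀ i₀.2 ↑i i.2 hine
            exact (hGs (↑i₀) _ hdisj).le
    -- conclude
    have hval : t ≤ e ↑i₀ w₀ := hv2 i₀
    have habs : |d i₀ * e ↑i₀ w₀| = |∑' i : ↥S', if i = i₀ then (0:ℝ) else d i * e ↑i w₀| := by
      have : d i₀ * e ↑i₀ w₀
          = -(∑' i : ↥S', if i = i₀ then (0:ℝ) else d i * e ↑i w₀) := by
        have := hsplit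
        rw [← hzero] at this
        linarith
      rw [this, abs_neg]
    rw [hdi₀, one_mul] at habs
    have : t ≤ t / 2 := by
      calc t ≤ e ↑i₀ w₀ := hval
        _ ≤ |e ↑i₀ w₀| := le_abs_self _
        _ ≤ t / 2 := habs ▸ htail
    linarith
  have hinj : Function.Injective φ := by
    intro T T' hTT'
    by_contra hne
    have hdiff : ∃ i₀ : ↥S', (i₀ ∈ T ∧ i₀ ∉ T') ∨ (i₀ ∈ T' ∧ i₀ ∉ T) := by
      by_contra hc
      push_neg at hc
      apply hne
      ext i₀
      constructor
      · intro h
        exact (hc i₀).1 h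
      · intro h
        exact (hc i₀).2 h
    obtain ⟨i₀, hi₀ | hi₀⟩ := hdiff
    · exact hmain T T' i₀ hi₀.1 hi₀.2 hTT'
    · exact hmain T' T i₀ hi₀.1 hi₀.2 hTT'.symm
  have hcard2 : (2 : Cardinal) ^ lam ≤ #(StrongDual ℝ V) := by
    have h1 := Cardinal.mk_le_of_injective hinj
    rwa [Cardinal.mk_set, hS'card] at h1
  exact lt_of_lt_of_le hpow hcard2

end QP

end QPAux

/-- Let `X` be a Banach sequence space such that `X` embeds continuously into `ℓ∞`, `X_a`
is non-trivial, and `X_a ≠ X`. Then the quotient space `X / X_a` (here represented by any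
Banach space `W` together with a quotient map `Q` with kernel `X_a` and the quotient norm)
is not isomorphic to a dual Banach space. -/
theorem quotient_by_oc_not_dual (X : BanachIdealSpace ℕ Measure.count)
    (hemb : ∃ K : ℝ, ∀ x, X.Mem x → ∀ n, |x n| ≤ K * X.N x)
    (hnontriv : ∃ x ∈ X.oc, x ≠ 0)
    (hproper : ∃ x, X.Mem x ∧ x ∉ X.oc)
    (W : Type) [NormedAddCommGroup W] [NormedSpace ℝ W] [CompleteSpace W]
    (Q : (ℕ → ℝ) → W)
    (hQadd : ∀ x y, X.Mem x → X.Mem y → Q (x + y) = Q x + Q y)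
    (hQsmul : ∀ (c : ℝ) x, X.Mem x → Q (c • x) = c • Q x)
    (hQsurj : ∀ w : W, ∃ x, X.Mem x ∧ Q x = w)
    (hQker : ∀ x, X.Mem x → (Q x = 0 ↔ x ∈ X.oc))
    (hQnorm : ∀ x, X.Mem x → ‖Q x‖ = distIn X.N x X.oc) :
    ∀ (V : Type) (_ : NormedAddCommGroup V) (_ : NormedSpace ℝ V) (_ : CompleteSpace V),
      IsEmpty (W ≃L[ℝ] StrongDual ℝ V) := by
  classical
  intro V _ _ _
  constructor
  intro J
  obtain ⟨x, hxmem, hxoc⟩ := hproper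
  obtain ⟨δ, hδ, hblocks⟩ := QP.exists_blocks X hemb hxmem hxoc
  choose B hBs using hblocks
  have hBgt : ∀ a, a < B a := by
    intro a
    by_contra hc
    push_neg at hc
    have hempty : QP.pc x (Set.Ico a (B a)) = 0 := by
      funext j
      have : j ∉ Set.Ico a (B a) := by
        rintro ⟨h1, h2⟩; omega
      exact if_neg this
    have h0 := hBs a
    rw [hempty, X.N_zero] at h0
    linarith
  obtain ⟨q, hq0, hqs⟩ : ∃ q : ℕ → ℕ, q 0 = 0 ∧ ∀ k, q (k + 1) = B (q k) :=
    ⟨fun k => Nat.rec 0 (fun _ qk => B qk) k, rfl, fun _ => rfl⟩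
  have hqlt : ∀ k, q k < q (k + 1) := fun k => by rw [hqs]; exact hBgt (q k)
  have hqmono : Monotone q := monotone_nat_of_le_succ fun k => (hqlt k).le
  have hqk : ∀ k, k ≤ q k := by
    intro k
    induction k with
    | zero => omega
    | succ k ih => have := hqlt k; omega
  set H : (ℕ → Bool) → Set ℕ := fun i => ⋃ k ∈ QP.adSet i, Set.Ico (q k) (q (k + 1)) with hH
  have hHdisj : ∀ i i' : ℕ → Bool, i ≠ i' → (H i ∩ H i').Finite := by
    intro i i' hne
    apply Set.Finite.subset (Set.Finite.biUnion (QP.adSet_almost_disjoint hne)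
      (fun k _ => Set.finite_Ico (q k) (q (k + 1))))
    rintro j ⟨hj1, hj2⟩
    obtain ⟨k, hk, hjk⟩ := Set.mem_iUnion₂.mp hj1
    obtain ⟨k', hk', hjk'⟩ := Set.mem_iUnion₂.mp hj2
    have hkk : k = k' := by
      by_contra hc
      obtain ⟨hjk1, hjk2⟩ := hjk
      obtain ⟨hjk1', hjk2'⟩ := hjk'
      rcases Nat.lt_or_ge k k' with h | h
      · have := hqmono (show k + 1 ≤ k' by omega)
        omega
      · have := hqmono (show k' + 1 ≤ k by omega)
        omega
    subst hkk
    exact Set.mem_biUnion ⟨hk, hk'⟩ hjk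
  have hheavy : ∀ i : ℕ → Bool, ∀ m : ℕ, ∃ s : Set ℕ,
      s ⊆ H i ∩ Set.Ici m ∧ δ ≤ X.N (QP.pc x s) := by
    intro i m
    obtain ⟨k, hkAD, hkm⟩ := (QP.adSet_infinite i).exists_gt m
    refine ⟨Set.Ico (q k) (q (k + 1)), ?_, ?_⟩
    · intro j hj
      refine ⟨Set.mem_biUnion hkAD hj, ?_⟩
      have h1 : q k ≤ j := hj.1
      have h2 := hqk k
      exact Set.mem_Ici.2 (by omega : m ≤ j)
    · rw [hqs k]
      exact hBs (q k)
  set y : (ℕ → Bool) → (ℕ → ℝ) := fun i => QP.pc x (H i) with hy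
  have hymem : ∀ i, X.Mem (y i) := fun i => QP.mem_pc X hxmem _
  set e : (ℕ → Bool) → StrongDual ℝ V := fun i => J (Q (y i)) with he
  have hQ0 : Q 0 = 0 := by
    have h1 := hQsmul 0 0 X.mem_zero
    simpa using h1
  have hQsum : ∀ (F : Finset (ℕ → Bool)) (s : (ℕ → Bool) → ℝ),
      Q (∑ i ∈ F, s i • y i) = ∑ i ∈ F, s i • Q (y i) := by
    intro F s
    induction F using Finset.cons_induction with
    | empty => simpa using hQ0
    | cons a F ha ih =>
      rw [Finset.sum_cons, Finset.sum_cons,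
        hQadd _ _ (X.mem_smul _ _ (hymem a))
          (QP.mem_sum X F _ fun i _ => X.mem_smul _ _ (hymem i)),
        hQsmul _ _ (hymem a), ih]
  set Cx : ℝ := X.N (fun j => |x j|) with hCx
  set Jn : ℝ := ‖(J : W →L[ℝ] StrongDual ℝ V)‖ with hJn
  have hCbound : ∀ (v : V) (F : Finset (ℕ → Bool)), ∑ i ∈ F, |e i v| ≤ (Jn * Cx) * ‖v‖ := by
    intro v F
    set s : (ℕ → Bool) → ℝ := fun i => if 0 ≤ e i v then 1 else -1 with hs
    have hs1 : ∀ i, |s i| ≤ 1 := by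
      intro i; rw [hs]; dsimp only; split <;> norm_num
    set z : ℕ → ℝ := ∑ i ∈ F, s i • y i with hz
    have hzmem : X.Mem z := QP.mem_sum X F _ fun i _ => X.mem_smul _ _ (hymem i)
    have h1 : J (Q z) = ∑ i ∈ F, s i • e i := by
      rw [hz, hQsum F s, map_sum]
      apply Finset.sum_congr rfl
      intro i _
      rw [_root_.map_smul]
    have h2 : (∑ i ∈ F, s i • e i) v = ∑ i ∈ F, s i * e i v := by
      rw [ContinuousLinearMap.sum_apply]
      apply Finset.sum_congr rfl
      intro i _
      rw [ContinuousLinearMap.smul_apply, smul_eq_mul]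
    have h3 : ∀ i, s i * e i v = |e i v| := by
      intro i
      rw [hs]; dsimp only
      split
      · rw [one_mul, abs_of_nonneg ‹_›]
      · rw [neg_one_mul, abs_of_neg (lt_of_not_ge ‹_›)]
    have h4 : ∑ i ∈ F, |e i v| = (J (Q z)) v := by
      rw [h1, h2]
      exact (Finset.sum_congr rfl fun i _ => h3 i).symm
    have h5 : (J (Q z)) v ≤ ‖J (Q z)‖ * ‖v‖ := by
      calc (J (Q z)) v ≤ |(J (Q z)) v| := le_abs_self _
        _ = ‖(J (Q z)) v‖ := (Real.norm_eq_abs _).symm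
        _ ≤ ‖J (Q z)‖ * ‖v‖ := (J (Q z)).le_opNorm v
    have h6 : ‖J (Q z)‖ ≤ Jn * ‖Q z‖ := by
      have := (J : W →L[ℝ] StrongDual ℝ V).le_opNorm (Q z)
      simpa using this
    have h7 : ‖Q z‖ ≤ Cx := by
      rw [hQnorm z hzmem]
      calc distIn X.N z X.oc ≤ X.N (fun j => |x j|) := by
            rw [hz, hy]
            exact QP.dist_upper X hxmem H F
              (fun i _ i' _ hne => hHdisj i i' hne) s hs1
        _ = Cx := hCx.symm
    calc ∑ i ∈ F, |e i v| = (J (Q z)) v := h4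
      _ ≤ ‖J (Q z)‖ * ‖v‖ := h5
      _ ≤ (Jn * ‖Q z‖) * ‖v‖ := mul_le_mul_of_nonneg_right h6 (norm_nonneg v)
      _ ≤ (Jn * Cx) * ‖v‖ := by
          apply mul_le_mul_of_nonneg_right _ (norm_nonneg v)
          exact mul_le_mul_of_nonneg_left h7 (by rw [hJn]; exact norm_nonneg (J : W →L[ℝ] StrongDual ℝ V))
  have hQynorm : ∀ i, δ ≤ ‖Q (y i)‖ := by
    intro i
    rw [hQnorm (y i) (hymem i)]
    apply QP.le_distIn X (y i)
    intro g hg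
    exact QP.dist_lower X hxmem (H i) (hheavy i) g hg
  set Jm : ℝ := ‖(J.symm : StrongDual ℝ V →L[ℝ] W)‖ with hJm
  have henorm : ∀ i, δ ≤ Jm * ‖e i‖ := by
    intro i
    calc δ ≤ ‖Q (y i)‖ := hQynorm i
      _ = ‖J.symm (J (Q (y i)))‖ := by rw [ContinuousLinearEquiv.symm_apply_apply]
      _ ≤ Jm * ‖e i‖ := by
          have := (J.symm : StrongDual ℝ V →L[ℝ] W).le_opNorm (J (Q (y i)))
          simpa [he] using this
  have hJmpos : 0 < Jm := by
    rcases lt_or_eq_of_le (norm_nonneg ((J.symm : StrongDual ℝ V →L[ℝ] W))) with h | h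
    · exact h
    · exfalso
      have h1 := henorm (fun _ => false)
      have h0 : Jm = 0 := by rw [hJm]; exact h.symm
      rw [h0, zero_mul] at h1
      linarith
  set t : ℝ := δ / (2 * Jm) with htdef
  have htpos : 0 < t := by
    rw [htdef]
    positivity
  have het : ∀ i, t < ‖e i‖ := by
    intro i
    have h1 : δ / Jm ≤ ‖e i‖ := by
      rw [div_le_iff₀ hJmpos]
      calc δ ≤ Jm * ‖e i‖ := henorm i
        _ = ‖e i‖ * Jm := mul_comm _ _
    have h2 : t < δ / Jm := by
      rw [htdef, div_lt_div_iff₀ (by positivity) hJmpos]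
      nlinarith
    linarith
  have hev : ∀ i, ∃ v, ‖v‖ ≤ 1 ∧ t ≤ e i v := by
    intro i
    by_contra hc
    push_neg at hc
    have hb : ∀ v : V, |e i v| ≤ t * ‖v‖ := by
      intro v
      rcases eq_or_ne v 0 with rfl | hv
      · simp
      · have hnv : 0 < ‖v‖ := norm_pos_iff.2 hv
        have hw : ‖(‖v‖⁻¹ • v)‖ ≤ 1 := by
          rw [norm_smul, norm_inv, norm_norm, inv_mul_cancel₀ hnv.ne']
        have h1 := hc _ hw
        have h2 := hc (-(‖v‖⁻¹ • v)) (by rw [norm_neg]; exact hw)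
        rw [map_neg] at h2
        have habs : |e i (‖v‖⁻¹ • v)| ≤ t := abs_le.2 ⟨by linarith, h1.le⟩
        rw [(e i).map_smul, smul_eq_mul, abs_mul, abs_inv, abs_norm] at habs
        calc |e i v| = ‖v‖ * (‖v‖⁻¹ * |e i v|) := by field_simp
          _ ≤ ‖v‖ * t := mul_le_mul_of_nonneg_left habs (norm_nonneg v)
          _ = t * ‖v‖ := mul_comm _ _
    have hop : ‖e i‖ ≤ t := ContinuousLinearMap.opNorm_le_bound _ htpos.le
      (fun v => by rw [Real.norm_eq_abs]; exact hb v)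
    exact absurd hop (not_le.2 (het i))
  have hcore := QP.card_core e (Jn * Cx) t htpos hCbound hev
  have hWle : (Cardinal.mk W) ≤ Cardinal.continuum := by
    have hsurj : Function.Surjective Q := fun w => (hQsurj w).imp fun x hx => hx.2
    have h1 := Cardinal.mk_le_of_surjective hsurj
    have h2 : (Cardinal.mk (ℕ → ℝ)) = Cardinal.continuum := by
      rw [Cardinal.mk_arrow, Cardinal.mk_real, Cardinal.mk_nat]
      simp only [Cardinal.lift_id]
      rw [← Cardinal.two_power_aleph0, ← Cardinal.power_mul, Cardinal.aleph0_mul_aleph0]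
    exact h2 ▸ h1
  have hWD : (Cardinal.mk (StrongDual ℝ V)) = (Cardinal.mk W) :=
    (Cardinal.mk_congr J.toLinearEquiv.toEquiv).symm
  rw [hWD] at hcore
  exact absurd (hcore.trans_le hWle) (lt_irrefl _)
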